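/- Let A ∈ ℝ^{n×n} and f > 0 be such that vᵀ A v ≤ −f ‖v‖² for all v ∈ ℝ^n (i.e., the symmetric part of A satisfies (A + Aᵀ)/2 ⪯ −f I). Let X, M ∈ ℝ^{n×n} be symmetric matrices satisfying the Lyapunov equation A X + X Aᵀ + M = 0. Then ‖X‖₂ ≤ ‖M‖₂ / (2f), where ‖·‖₂ denotes the spectral norm. -/

import Mathlib

open Matrix

/-- Euclidean norm of a vector. -/
noncomputable def vnorm {ι : Type*} [Fintype ι] (v : ι → ℝ) : ℝ :=
  Real.sqrt (∑ i, v i ^ 2)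

/-- Spectral (ℓ²-operator) norm of a real matrix. -/
noncomputable def matSpectralNorm {ι κ : Type*} [Fintype ι] [Fintype κ]
    (M : Matrix ι κ ℝ) : ℝ :=
  ⨆ v : {v : κ → ℝ // vnorm v ≤ 1}, vnorm (M.mulVec v.1)

lemma vnorm_nonneg {ι : Type*} [Fintype ι] (v : ι → ℝ) : 0 ≤ vnorm v :=
  Real.sqrt_nonneg _

lemma vnorm_sq {ι : Type*} [Fintype ι] (v : ι → ℝ) :
    vnorm v ^ 2 = ∑ i, v i ^ 2 :=
  Real.sq_sqrt (Finset.sum_nonneg fun i _ => sq_nonneg _)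

lemma vnorm_zero {ι : Type*} [Fintype ι] : vnorm (0 : ι → ℝ) = 0 := by
  simp [vnorm]

/-- norm on EuclideanSpace agrees with vnorm -/
lemma vnorm_eq_norm {n : ℕ} (v : EuclideanSpace ℝ (Fin n)) :
    vnorm (⇑v) = ‖v‖ := by
  rw [EuclideanSpace.norm_eq]
  simp [vnorm, sq_abs]

/-- Cauchy–Schwarz for dot products. -/
lemma abs_dot_le {ι : Type*} [Fintype ι] (v w : ι → ℝ) :
    |v ⬝ᵥ w| ≤ vnorm v * vnorm w := by
  have h := Finset.sum_mul_sq_le_sq_mul_sq Finset.univ v w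
  have : |v ⬝ᵥ w| = Real.sqrt ((v ⬝ᵥ w) ^ 2) := (Real.sqrt_sq_eq_abs _).symm
  rw [this]
  calc Real.sqrt ((v ⬝ᵥ w) ^ 2)
      ≤ Real.sqrt ((∑ i, v i ^ 2) * (∑ i, w i ^ 2)) := by
        apply Real.sqrt_le_sqrt
        simpa [dotProduct] using h
    _ = vnorm v * vnorm w := by
        rw [Real.sqrt_mul (Finset.sum_nonneg fun i _ => sq_nonneg _)]
        rfl

instance {ι : Type*} [Fintype ι] : Nonempty {v : ι → ℝ // vnorm v ≤ 1} :=
  ⟨⟨0, by rw [vnorm_zero]; norm_num⟩⟩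

lemma matSpectralNorm_bddAbove {ι κ : Type*} [Fintype ι] [Fintype κ]
    (M : Matrix ι κ ℝ) :
    BddAbove (Set.range fun v : {v : κ → ℝ // vnorm v ≤ 1} =>
      vnorm (M.mulVec v.1)) := by
  refine ⟨Real.sqrt (∑ i, ∑ j, M i j ^ 2), ?_⟩
  rintro x ⟨⟨v, hv⟩, rfl⟩
  simp only [vnorm]
  apply Real.sqrt_le_sqrt
  have hv2 : ∑ j, v j ^ 2 ≤ 1 := by
    have := vnorm_sq v
    nlinarith [vnorm_nonneg v, Real.sq_sqrt (Finset.sum_nonneg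
      (fun j (_ : j ∈ Finset.univ) => sq_nonneg (v j)))]
  refine Finset.sum_le_sum fun i _ => ?_
  have hCS := Finset.sum_mul_sq_le_sq_mul_sq Finset.univ (fun j => M i j) v
  have hnn : (0 : ℝ) ≤ ∑ j, M i j ^ 2 :=
    Finset.sum_nonneg fun j _ => sq_nonneg _
  calc M.mulVec v i ^ 2 = (∑ j, M i j * v j) ^ 2 := by
        simp [Matrix.mulVec, dotProduct]
    _ ≤ (∑ j, M i j ^ 2) * (∑ j, v j ^ 2) := hCS
    _ ≤ (∑ j, M i j ^ 2) * 1 := by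
        exact mul_le_mul_of_nonneg_left hv2 hnn
    _ = ∑ j, M i j ^ 2 := mul_one _

lemma le_matSpectralNorm {ι κ : Type*} [Fintype ι] [Fintype κ]
    (M : Matrix ι κ ℝ) (v : κ → ℝ) (hv : vnorm v ≤ 1) :
    vnorm (M.mulVec v) ≤ matSpectralNorm M :=
  le_ciSup (matSpectralNorm_bddAbove M) (⟨v, hv⟩ : {v : κ → ℝ // vnorm v ≤ 1})

lemma matSpectralNorm_nonneg {ι κ : Type*} [Fintype ι] [Fintype κ]
    (M : Matrix ι κ ℝ) : 0 ≤ matSpectralNorm M := by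
  have h := le_matSpectralNorm M 0 (by rw [vnorm_zero]; norm_num)
  exact le_trans (vnorm_nonneg _) h

/-- If the symmetric part of `A` is bounded above by `−f I`
(in the quadratic-form sense) and the symmetric matrices `X, M` satisfy the
Lyapunov equation `A X + X Aᵀ + M = 0`, then `‖X‖₂ ≤ ‖M‖₂ / (2 f)`. -/
theorem lyapunov_solution_bound (n : ℕ) (A X M : Matrix (Fin n) (Fin n) ℝ)
    (f : ℝ) (hf : 0 < f)
    (hA : ∀ v : Fin n → ℝ, v ⬝ᵥ A.mulVec v ≤ -f * vnorm v ^ 2)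
    (hX : X.IsSymm) (hM : M.IsSymm)
    (hLyap : A * X + X * Aᵀ + M = 0) :
    matSpectralNorm X ≤ matSpectralNorm M / (2 * f) := by
  have h2f : (0 : ℝ) < 2 * f := by linarith
  rcases Nat.eq_zero_or_pos n with h0 | hn
  · subst h0
    have hsX : matSpectralNorm X ≤ 0 := by
      apply ciSup_le
      intro v
      have : X.mulVec v.1 = 0 := by
        funext i; exact i.elim0
      rw [this, vnorm_zero]
    exact le_trans hsX (div_nonneg (matSpectralNorm_nonneg M) h2f.le)
  haveI : Nonempty (Fin n) := Fin.pos_iff_nonempty.mp hn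
  -- X is Hermitian
  have hX' : X.IsHermitian := by
    rwa [Matrix.IsHermitian, Matrix.conjTranspose_eq_transpose_of_trivial]
  set b := hX'.eigenvectorBasis with hb
  set μ := hX'.eigenvalues with hμ
  -- choose eigenvalue of maximal absolute value
  obtain ⟨i₀, -, hi₀⟩ := Finset.exists_max_image Finset.univ (fun i => |μ i|)
    ⟨Classical.arbitrary (Fin n), Finset.mem_univ _⟩
  -- the coordinates of X *ᵥ v in the eigenbasis
  have hrepr : ∀ (w : EuclideanSpace ℝ (Fin n)) (i : Fin n),
      b.repr ((WithLp.equiv 2 (Fin n → ℝ)).symm (X.mulVec ⇑w)) i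
        = μ i * b.repr w i := by
    intro w i
    rw [OrthonormalBasis.repr_apply_apply, OrthonormalBasis.repr_apply_apply]
    have hinner : ∀ x y : EuclideanSpace ℝ (Fin n),
        (inner ℝ x y : ℝ) = ⇑x ⬝ᵥ ⇑y := by
      intro x y
      simp [PiLp.inner_apply, dotProduct, mul_comm]
    rw [hinner, hinner]
    have hcoe : ⇑((WithLp.equiv 2 (Fin n → ℝ)).symm (X.mulVec ⇑w))
        = X.mulVec ⇑w := rfl
    rw [hcoe]
    have hXb : X.mulVec ⇑(b i) = μ i • ⇑(b i) := hX'.mulVec_eigenvectorBasis i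
    calc ⇑(b i) ⬝ᵥ X.mulVec ⇑w
        = (Xᵀ.mulVec ⇑(b i)) ⬝ᵥ ⇑w := by
          rw [Matrix.mulVec_transpose, ← Matrix.dotProduct_mulVec]
      _ = (X.mulVec ⇑(b i)) ⬝ᵥ ⇑w := by rw [hX]
      _ = (μ i • ⇑(b i)) ⬝ᵥ ⇑w := by rw [hXb]
      _ = μ i * (⇑(b i) ⬝ᵥ ⇑w) := smul_dotProduct _ _ _
  -- step 1: spectralNorm X ≤ |μ i₀|
  have step1 : matSpectralNorm X ≤ |μ i₀| := by
    apply ciSup_le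
    rintro ⟨v, hv⟩
    set w : EuclideanSpace ℝ (Fin n) := (WithLp.equiv 2 (Fin n → ℝ)).symm v
      with hw
    set y : EuclideanSpace ℝ (Fin n) :=
      (WithLp.equiv 2 (Fin n → ℝ)).symm (X.mulVec v) with hy
    have hnv : vnorm (X.mulVec v) = ‖y‖ := vnorm_eq_norm y
    rw [hnv]
    have hysq : ‖y‖ ^ 2 ≤ |μ i₀| ^ 2 * ‖w‖ ^ 2 := by
      have h1 : ‖y‖ = ‖b.repr y‖ := (b.repr.norm_map y).symm
      have h2 : ‖w‖ = ‖b.repr w‖ := (b.repr.norm_map w).symm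
      rw [h1, h2, EuclideanSpace.norm_eq, EuclideanSpace.norm_eq]
      rw [Real.sq_sqrt (Finset.sum_nonneg fun i _ => sq_nonneg _),
        Real.sq_sqrt (Finset.sum_nonneg fun i _ => sq_nonneg _),
        Finset.mul_sum]
      refine Finset.sum_le_sum fun i _ => ?_
      have hry : b.repr y i = μ i * b.repr w i := hrepr w i
      rw [Real.norm_eq_abs, Real.norm_eq_abs, hry, abs_mul, mul_pow]
      exact mul_le_mul_of_nonneg_right
        (pow_le_pow_left₀ (abs_nonneg _) (hi₀ i (Finset.mem_univ i)) 2)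
        (sq_nonneg _)
    have hwle : ‖w‖ ≤ 1 := by rw [← vnorm_eq_norm]; exact hv
    have hw2 : ‖w‖ ^ 2 ≤ 1 := by nlinarith [norm_nonneg w]
    have hmm : |μ i₀| ^ 2 * ‖w‖ ^ 2 ≤ |μ i₀| ^ 2 * 1 :=
      mul_le_mul_of_nonneg_left hw2 (sq_nonneg _)
    have hfin : ‖y‖ ^ 2 ≤ |μ i₀| ^ 2 := by linarith
    calc ‖y‖ = Real.sqrt (‖y‖ ^ 2) := (Real.sqrt_sq (norm_nonneg _)).symm
      _ ≤ Real.sqrt (|μ i₀| ^ 2) := Real.sqrt_le_sqrt hfin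
      _ = |μ i₀| := Real.sqrt_sq (abs_nonneg _)
  -- step 2: 2 f |μ i₀| ≤ spectralNorm M
  have step2 : 2 * f * |μ i₀| ≤ matSpectralNorm M := by
    set u : Fin n → ℝ := ⇑(b i₀) with hu
    have hu1 : vnorm u = 1 := by
      rw [hu, vnorm_eq_norm]; exact b.orthonormal.1 i₀
    have hXu : X.mulVec u = μ i₀ • u := hX'.mulVec_eigenvectorBasis i₀
    -- M = -(A*X + X*Aᵀ)
    have hMeq : M = -(A * X + X * Aᵀ) :=
      eq_neg_of_add_eq_zero_right hLyap
    have hq : u ⬝ᵥ A.mulVec u ≤ -f := by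
      have := hA u
      rw [hu1] at this; linarith [this]
    have hkey : u ⬝ᵥ M.mulVec u = -(2 * μ i₀ * (u ⬝ᵥ A.mulVec u)) := by
      rw [hMeq]
      have e1 : (A * X).mulVec u = A.mulVec (X.mulVec u) :=
        (Matrix.mulVec_mulVec u A X).symm
      have e2 : (X * Aᵀ).mulVec u = X.mulVec (Aᵀ.mulVec u) :=
        (Matrix.mulVec_mulVec u X Aᵀ).symm
      have t1 : u ⬝ᵥ (A * X).mulVec u = μ i₀ * (u ⬝ᵥ A.mulVec u) := by
        rw [e1, hXu, Matrix.mulVec_smul, dotProduct_smul, smul_eq_mul]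
      have t2 : u ⬝ᵥ (X * Aᵀ).mulVec u = μ i₀ * (u ⬝ᵥ A.mulVec u) := by
        rw [e2]
        have : u ⬝ᵥ X.mulVec (Aᵀ.mulVec u)
            = (X.mulVec u) ⬝ᵥ (Aᵀ.mulVec u) := by
          rw [Matrix.dotProduct_mulVec, ← Matrix.mulVec_transpose, hX]
        rw [this, hXu, smul_dotProduct, smul_eq_mul]
        congr 1
        rw [Matrix.dotProduct_mulVec u Aᵀ u, ← Matrix.mulVec_transpose,
          Matrix.transpose_transpose]
        exact dotProduct_comm _ _
      have : u ⬝ᵥ (-(A * X + X * Aᵀ)).mulVec u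
          = -(u ⬝ᵥ (A * X).mulVec u + u ⬝ᵥ (X * Aᵀ).mulVec u) := by
        rw [Matrix.neg_mulVec, Matrix.add_mulVec]
        simp [dotProduct_add, dotProduct_neg]
      rw [this, t1, t2]; ring
    have habs : 2 * f * |μ i₀| ≤ |u ⬝ᵥ M.mulVec u| := by
      rw [hkey, abs_neg]
      have : |2 * μ i₀ * (u ⬝ᵥ A.mulVec u)|
          = 2 * |μ i₀| * |u ⬝ᵥ A.mulVec u| := by
        rw [abs_mul, abs_mul]; norm_num
      rw [this]
      have hq' : f ≤ |u ⬝ᵥ A.mulVec u| := by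
        rw [abs_of_nonpos (by linarith : u ⬝ᵥ A.mulVec u ≤ 0)]; linarith
      nlinarith [abs_nonneg (μ i₀)]
    have hcs : |u ⬝ᵥ M.mulVec u| ≤ vnorm (M.mulVec u) := by
      have := abs_dot_le u (M.mulVec u)
      rwa [hu1, one_mul] at this
    have hsp : vnorm (M.mulVec u) ≤ matSpectralNorm M :=
      le_matSpectralNorm M u hu1.le
    linarith
  rw [le_div_iff₀ h2f]
  calc matSpectralNorm X * (2 * f) ≤ |μ i₀| * (2 * f) :=
        mul_le_mul_of_nonneg_right step1 h2f.le
    _ = 2 * f * |μ i₀| := by ring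
    _ ≤ matSpectralNorm M := step2
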